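/- There exist an F₂-linear subspace D of GF(4)^90 with dim_{F₂} D = 108 satisfying D^⊥ ⊆ D with respect to the trace-Hermitian inner product, and a finite set T ⊆ GF(4)^90 with |T| · 17² ≥ 16^18 such that the cosets t + D for t ∈ T are pairwise disjoint and any two distinct vectors in the union ⋃_{t∈T} (t + D) are at Hamming distance at least 3. (This is the classical union normalizer code of the nonadditive quantum code ((90, 2^{81.825}, 3))₂, whose dimension |T|·2^18 exceeds that of the best stabilizer code [[90,81,3]]₂.) -/

import Mathlib

noncomputable section
open Classical

abbrev GF4 := GaloisField 2 2

instance : Fintype GF4 := Fintype.ofFinite _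

lemma gf4_card : Fintype.card GF4 = 4 := by
  have := GaloisField.card 2 2 (by norm_num)
  rwa [Nat.card_eq_fintype_card] at this

lemma gf4_pow4 (x : GF4) : x ^ 4 = x := by
  have := FiniteField.pow_card x
  rwa [gf4_card] at this

lemma htwo : (2 : GF4) = 0 := by
  have := CharP.cast_eq_zero GF4 2
  exact_mod_cast this

lemma gf4_sq_cases (x : GF4) (h : x ^ 2 = x) : x = 0 ∨ x = 1 := by
  have : x * (x - 1) = 0 := by linear_combination h
  rcases mul_eq_zero.mp this with h | h
  · exact Or.inl h
  · exact Or.inr (by linear_combination h)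

lemma exists_omg : ∃ w : GF4, w ^ 2 = w + 1 := by
  by_contra hcon
  push_neg at hcon
  have hall : ∀ x : GF4, x = 0 ∨ x = 1 := by
    intro x
    have h4 : (x ^ 2 + x) ^ 2 = x ^ 2 + x := by
      have hx4 : x ^ 4 = x := gf4_pow4 x
      linear_combination hx4 + x ^ 3 * htwo
    rcases gf4_sq_cases _ h4 with h | h
    · exact gf4_sq_cases x (by linear_combination h - x * htwo)
    · exact absurd (by linear_combination h - x * htwo : x ^ 2 = x + 1) (hcon x)
  have : Fintype.card GF4 ≤ 2 := by
    have hsub : (Finset.univ : Finset GF4) ⊆ {0, 1} := by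
      intro x _
      rcases hall x with h | h <;> simp [h]
    calc Fintype.card GF4 = Finset.univ.card := rfl
      _ ≤ ({0,1} : Finset GF4).card := Finset.card_le_card hsub
      _ ≤ 2 := Finset.card_insert_le _ _ |>.trans (by simp)
  rw [gf4_card] at this; omega

def omg : GF4 := exists_omg.choose

lemma homg : omg ^ 2 = omg + 1 := exists_omg.choose_spec

lemma omg_ne_zero : omg ≠ 0 := by
  intro h
  have h2 := homg
  rw [h] at h2
  simp at h2

lemma omg_ne_one : omg ≠ 1 := by
  intro h
  have h2 := homg
  rw [h] at h2
  exact one_ne_zero (by linear_combination h2 + htwo)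

lemma omg1_ne_zero : omg + 1 ≠ 0 := by
  intro h
  exact omg_ne_one (by linear_combination h - htwo)

lemma omg1_ne_one : omg + 1 ≠ 1 := by
  intro h
  exact omg_ne_zero (by linear_combination h)

lemma omg1_ne_omg : omg + 1 ≠ omg := by
  intro h
  exact one_ne_zero (by linear_combination h)

lemma gf4_cases (x : GF4) : x = 0 ∨ x = 1 ∨ x = omg ∨ x = omg + 1 := by
  have hcard : ({0, 1, omg, omg + 1} : Finset GF4).card = 4 := by
    rw [Finset.card_insert_of_notMem, Finset.card_insert_of_notMem,
        Finset.card_insert_of_notMem, Finset.card_singleton]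
    · simp only [Finset.mem_singleton]
      exact fun h => omg1_ne_omg h.symm
    · simp only [Finset.mem_insert, Finset.mem_singleton]
      push_neg
      exact ⟨fun h => omg_ne_one h.symm, fun h => omg1_ne_one h.symm⟩
    · simp only [Finset.mem_insert, Finset.mem_singleton]
      push_neg
      exact ⟨fun h => one_ne_zero h.symm, fun h => omg_ne_zero h.symm,
        fun h => omg1_ne_zero h.symm⟩
  have huniv : ({0, 1, omg, omg + 1} : Finset GF4) = Finset.univ := by
    apply Finset.eq_univ_of_card
    rw [hcard, gf4_card]
  have : x ∈ ({0, 1, omg, omg + 1} : Finset GF4) := huniv ▸ Finset.mem_univ x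
  simpa using this

/-! ### the sesquilinear-ish form building block -/

def ff (a x : GF4) : GF4 := a * x ^ 2 + a ^ 2 * x

lemma ff_zero_left (x : GF4) : ff 0 x = 0 := by simp [ff]

lemma ff_zero_right (a : GF4) : ff a 0 = 0 := by simp [ff]

lemma ff_add_right (a x y : GF4) : ff a (x + y) = ff a x + ff a y := by
  simp only [ff]
  linear_combination a*x*y*htwo

lemma ff_add_left (a b x : GF4) : ff (a + b) x = ff a x + ff b x := by
  simp only [ff]
  linear_combination a*b*x*htwo

lemma ff_sq (a x : GF4) : ff a x ^ 2 = ff a x := by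
  simp only [ff]
  have h1 : a ^ 4 = a := gf4_pow4 a
  have h2 : x ^ 4 = x := gf4_pow4 x
  linear_combination (x^2) * h1 + (a^2)*h2 + (a^3*x^3)*htwo

-- values
lemma ff11 : ff 1 1 = 0 := by simp only [ff]; linear_combination htwo
lemma ff1w : ff 1 omg = 1 := by simp only [ff]; linear_combination homg + omg*htwo
lemma ff1w2 : ff 1 (omg + 1) = 1 := by
  simp only [ff]; linear_combination homg + (2*omg+1) * htwo
lemma ffw1 : ff omg 1 = 1 := by simp only [ff]; linear_combination homg + omg*htwo
lemma ffww : ff omg omg = 0 := by simp only [ff]; linear_combination omg^3 * htwo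
lemma ffww2 : ff omg (omg + 1) = 1 := by
  simp only [ff]
  linear_combination (2*omg+5)*homg + (4*omg+2)*htwo

/-! ### the 5-qubit block code -/

lemma gf4_oneone : (1 : GF4) + 1 = 0 := by linear_combination htwo

def G : Fin 4 → Fin 5 → GF4 :=
  ![![1, omg, omg, 1, 0], ![0, 1, omg, omg, 1], ![1, 0, 1, omg, omg], ![omg, 1, 0, 1, omg]]

def Bsum (g v : Fin 5 → GF4) : GF4 := ∑ s, ff (g s) (v s)

set_option maxHeartbeats 20000000 in
lemma pairZero (v : Fin 5 → GF4) (a b : Fin 5) (hab : a ≠ b)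
    (hsupp : ∀ s, s ≠ a → s ≠ b → v s = 0)
    (heq : ∀ r : Fin 4, Bsum (G r) v = 0) : ∀ s, v s = 0 := by
  fin_cases a <;> fin_cases b
  · exact absurd rfl hab
  · -- a=0 b=1
    have hz2 : v 2 = 0 := hsupp 2 (by decide) (by decide)
    have hz3 : v 3 = 0 := hsupp 3 (by decide) (by decide)
    have hz4 : v 4 = 0 := hsupp 4 (by decide) (by decide)
    have e0 := heq 0
    have e1 := heq 1
    have e2 := heq 2
    have e3 := heq 3
    simp only [Bsum, G, Fin.sum_univ_five, Matrix.cons_val', Matrix.cons_val_zero,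
      Matrix.cons_val_one, Matrix.head_cons, Matrix.head_fin_const, Matrix.cons_val_fin_one,
      Matrix.cons_val_two, Matrix.tail_cons, Matrix.cons_val_three, Matrix.cons_val_four,
      hz2, hz3, hz4, ff_zero_left, ff_zero_right, add_zero, zero_add] at e0 e1 e2 e3
    rcases gf4_cases (v 0) with h|h|h|h <;> rcases gf4_cases (v 1) with h'|h'|h'|h' <;>
      simp only [h, h'] at e0 e1 e2 e3 <;>
      simp only [ff11, ff1w, ff1w2, ffw1, ffww, ffww2, ff_zero_left, ff_zero_right,
        add_zero, zero_add, gf4_oneone] at e0 e1 e2 e3 <;>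
      first
        | (intro s; fin_cases s <;> assumption)
        | exact absurd e0 one_ne_zero
        | exact absurd e1 one_ne_zero
        | exact absurd e2 one_ne_zero
        | exact absurd e3 one_ne_zero
  · -- a=0 b=2
    have hz1 : v 1 = 0 := hsupp 1 (by decide) (by decide)
    have hz3 : v 3 = 0 := hsupp 3 (by decide) (by decide)
    have hz4 : v 4 = 0 := hsupp 4 (by decide) (by decide)
    have e0 := heq 0
    have e1 := heq 1
    have e2 := heq 2
    have e3 := heq 3
    simp only [Bsum, G, Fin.sum_univ_five, Matrix.cons_val', Matrix.cons_val_zero,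
      Matrix.cons_val_one, Matrix.head_cons, Matrix.head_fin_const, Matrix.cons_val_fin_one,
      Matrix.cons_val_two, Matrix.tail_cons, Matrix.cons_val_three, Matrix.cons_val_four,
      hz1, hz3, hz4, ff_zero_left, ff_zero_right, add_zero, zero_add] at e0 e1 e2 e3
    rcases gf4_cases (v 0) with h|h|h|h <;> rcases gf4_cases (v 2) with h'|h'|h'|h' <;>
      simp only [h, h'] at e0 e1 e2 e3 <;>
      simp only [ff11, ff1w, ff1w2, ffw1, ffww, ffww2, ff_zero_left, ff_zero_right,
        add_zero, zero_add, gf4_oneone] at e0 e1 e2 e3 <;>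
      first
        | (intro s; fin_cases s <;> assumption)
        | exact absurd e0 one_ne_zero
        | exact absurd e1 one_ne_zero
        | exact absurd e2 one_ne_zero
        | exact absurd e3 one_ne_zero
  · -- a=0 b=3
    have hz1 : v 1 = 0 := hsupp 1 (by decide) (by decide)
    have hz2 : v 2 = 0 := hsupp 2 (by decide) (by decide)
    have hz4 : v 4 = 0 := hsupp 4 (by decide) (by decide)
    have e0 := heq 0
    have e1 := heq 1
    have e2 := heq 2
    have e3 := heq 3
    simp only [Bsum, G, Fin.sum_univ_five, Matrix.cons_val', Matrix.cons_val_zero,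
      Matrix.cons_val_one, Matrix.head_cons, Matrix.head_fin_const, Matrix.cons_val_fin_one,
      Matrix.cons_val_two, Matrix.tail_cons, Matrix.cons_val_three, Matrix.cons_val_four,
      hz1, hz2, hz4, ff_zero_left, ff_zero_right, add_zero, zero_add] at e0 e1 e2 e3
    rcases gf4_cases (v 0) with h|h|h|h <;> rcases gf4_cases (v 3) with h'|h'|h'|h' <;>
      simp only [h, h'] at e0 e1 e2 e3 <;>
      simp only [ff11, ff1w, ff1w2, ffw1, ffww, ffww2, ff_zero_left, ff_zero_right,
        add_zero, zero_add, gf4_oneone] at e0 e1 e2 e3 <;>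
      first
        | (intro s; fin_cases s <;> assumption)
        | exact absurd e0 one_ne_zero
        | exact absurd e1 one_ne_zero
        | exact absurd e2 one_ne_zero
        | exact absurd e3 one_ne_zero
  · -- a=0 b=4
    have hz1 : v 1 = 0 := hsupp 1 (by decide) (by decide)
    have hz2 : v 2 = 0 := hsupp 2 (by decide) (by decide)
    have hz3 : v 3 = 0 := hsupp 3 (by decide) (by decide)
    have e0 := heq 0
    have e1 := heq 1
    have e2 := heq 2
    have e3 := heq 3
    simp only [Bsum, G, Fin.sum_univ_five, Matrix.cons_val', Matrix.cons_val_zero,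
      Matrix.cons_val_one, Matrix.head_cons, Matrix.head_fin_const, Matrix.cons_val_fin_one,
      Matrix.cons_val_two, Matrix.tail_cons, Matrix.cons_val_three, Matrix.cons_val_four,
      hz1, hz2, hz3, ff_zero_left, ff_zero_right, add_zero, zero_add] at e0 e1 e2 e3
    rcases gf4_cases (v 0) with h|h|h|h <;> rcases gf4_cases (v 4) with h'|h'|h'|h' <;>
      simp only [h, h'] at e0 e1 e2 e3 <;>
      simp only [ff11, ff1w, ff1w2, ffw1, ffww, ffww2, ff_zero_left, ff_zero_right,
        add_zero, zero_add, gf4_oneone] at e0 e1 e2 e3 <;>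
      first
        | (intro s; fin_cases s <;> assumption)
        | exact absurd e0 one_ne_zero
        | exact absurd e1 one_ne_zero
        | exact absurd e2 one_ne_zero
        | exact absurd e3 one_ne_zero
  · -- a=1 b=0
    have hz2 : v 2 = 0 := hsupp 2 (by decide) (by decide)
    have hz3 : v 3 = 0 := hsupp 3 (by decide) (by decide)
    have hz4 : v 4 = 0 := hsupp 4 (by decide) (by decide)
    have e0 := heq 0
    have e1 := heq 1
    have e2 := heq 2
    have e3 := heq 3
    simp only [Bsum, G, Fin.sum_univ_five, Matrix.cons_val', Matrix.cons_val_zero,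
      Matrix.cons_val_one, Matrix.head_cons, Matrix.head_fin_const, Matrix.cons_val_fin_one,
      Matrix.cons_val_two, Matrix.tail_cons, Matrix.cons_val_three, Matrix.cons_val_four,
      hz2, hz3, hz4, ff_zero_left, ff_zero_right, add_zero, zero_add] at e0 e1 e2 e3
    rcases gf4_cases (v 1) with h|h|h|h <;> rcases gf4_cases (v 0) with h'|h'|h'|h' <;>
      simp only [h, h'] at e0 e1 e2 e3 <;>
      simp only [ff11, ff1w, ff1w2, ffw1, ffww, ffww2, ff_zero_left, ff_zero_right,
        add_zero, zero_add, gf4_oneone] at e0 e1 e2 e3 <;>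
      first
        | (intro s; fin_cases s <;> assumption)
        | exact absurd e0 one_ne_zero
        | exact absurd e1 one_ne_zero
        | exact absurd e2 one_ne_zero
        | exact absurd e3 one_ne_zero
  · exact absurd rfl hab
  · -- a=1 b=2
    have hz0 : v 0 = 0 := hsupp 0 (by decide) (by decide)
    have hz3 : v 3 = 0 := hsupp 3 (by decide) (by decide)
    have hz4 : v 4 = 0 := hsupp 4 (by decide) (by decide)
    have e0 := heq 0
    have e1 := heq 1
    have e2 := heq 2
    have e3 := heq 3
    simp only [Bsum, G, Fin.sum_univ_five, Matrix.cons_val', Matrix.cons_val_zero,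
      Matrix.cons_val_one, Matrix.head_cons, Matrix.head_fin_const, Matrix.cons_val_fin_one,
      Matrix.cons_val_two, Matrix.tail_cons, Matrix.cons_val_three, Matrix.cons_val_four,
      hz0, hz3, hz4, ff_zero_left, ff_zero_right, add_zero, zero_add] at e0 e1 e2 e3
    rcases gf4_cases (v 1) with h|h|h|h <;> rcases gf4_cases (v 2) with h'|h'|h'|h' <;>
      simp only [h, h'] at e0 e1 e2 e3 <;>
      simp only [ff11, ff1w, ff1w2, ffw1, ffww, ffww2, ff_zero_left, ff_zero_right,
        add_zero, zero_add, gf4_oneone] at e0 e1 e2 e3 <;>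
      first
        | (intro s; fin_cases s <;> assumption)
        | exact absurd e0 one_ne_zero
        | exact absurd e1 one_ne_zero
        | exact absurd e2 one_ne_zero
        | exact absurd e3 one_ne_zero
  · -- a=1 b=3
    have hz0 : v 0 = 0 := hsupp 0 (by decide) (by decide)
    have hz2 : v 2 = 0 := hsupp 2 (by decide) (by decide)
    have hz4 : v 4 = 0 := hsupp 4 (by decide) (by decide)
    have e0 := heq 0
    have e1 := heq 1
    have e2 := heq 2
    have e3 := heq 3
    simp only [Bsum, G, Fin.sum_univ_five, Matrix.cons_val', Matrix.cons_val_zero,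
      Matrix.cons_val_one, Matrix.head_cons, Matrix.head_fin_const, Matrix.cons_val_fin_one,
      Matrix.cons_val_two, Matrix.tail_cons, Matrix.cons_val_three, Matrix.cons_val_four,
      hz0, hz2, hz4, ff_zero_left, ff_zero_right, add_zero, zero_add] at e0 e1 e2 e3
    rcases gf4_cases (v 1) with h|h|h|h <;> rcases gf4_cases (v 3) with h'|h'|h'|h' <;>
      simp only [h, h'] at e0 e1 e2 e3 <;>
      simp only [ff11, ff1w, ff1w2, ffw1, ffww, ffww2, ff_zero_left, ff_zero_right,
        add_zero, zero_add, gf4_oneone] at e0 e1 e2 e3 <;>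
      first
        | (intro s; fin_cases s <;> assumption)
        | exact absurd e0 one_ne_zero
        | exact absurd e1 one_ne_zero
        | exact absurd e2 one_ne_zero
        | exact absurd e3 one_ne_zero
  · -- a=1 b=4
    have hz0 : v 0 = 0 := hsupp 0 (by decide) (by decide)
    have hz2 : v 2 = 0 := hsupp 2 (by decide) (by decide)
    have hz3 : v 3 = 0 := hsupp 3 (by decide) (by decide)
    have e0 := heq 0
    have e1 := heq 1
    have e2 := heq 2
    have e3 := heq 3
    simp only [Bsum, G, Fin.sum_univ_five, Matrix.cons_val', Matrix.cons_val_zero,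
      Matrix.cons_val_one, Matrix.head_cons, Matrix.head_fin_const, Matrix.cons_val_fin_one,
      Matrix.cons_val_two, Matrix.tail_cons, Matrix.cons_val_three, Matrix.cons_val_four,
      hz0, hz2, hz3, ff_zero_left, ff_zero_right, add_zero, zero_add] at e0 e1 e2 e3
    rcases gf4_cases (v 1) with h|h|h|h <;> rcases gf4_cases (v 4) with h'|h'|h'|h' <;>
      simp only [h, h'] at e0 e1 e2 e3 <;>
      simp only [ff11, ff1w, ff1w2, ffw1, ffww, ffww2, ff_zero_left, ff_zero_right,
        add_zero, zero_add, gf4_oneone] at e0 e1 e2 e3 <;>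
      first
        | (intro s; fin_cases s <;> assumption)
        | exact absurd e0 one_ne_zero
        | exact absurd e1 one_ne_zero
        | exact absurd e2 one_ne_zero
        | exact absurd e3 one_ne_zero
  · -- a=2 b=0
    have hz1 : v 1 = 0 := hsupp 1 (by decide) (by decide)
    have hz3 : v 3 = 0 := hsupp 3 (by decide) (by decide)
    have hz4 : v 4 = 0 := hsupp 4 (by decide) (by decide)
    have e0 := heq 0
    have e1 := heq 1
    have e2 := heq 2
    have e3 := heq 3
    simp only [Bsum, G, Fin.sum_univ_five, Matrix.cons_val', Matrix.cons_val_zero,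
      Matrix.cons_val_one, Matrix.head_cons, Matrix.head_fin_const, Matrix.cons_val_fin_one,
      Matrix.cons_val_two, Matrix.tail_cons, Matrix.cons_val_three, Matrix.cons_val_four,
      hz1, hz3, hz4, ff_zero_left, ff_zero_right, add_zero, zero_add] at e0 e1 e2 e3
    rcases gf4_cases (v 2) with h|h|h|h <;> rcases gf4_cases (v 0) with h'|h'|h'|h' <;>
      simp only [h, h'] at e0 e1 e2 e3 <;>
      simp only [ff11, ff1w, ff1w2, ffw1, ffww, ffww2, ff_zero_left, ff_zero_right,
        add_zero, zero_add, gf4_oneone] at e0 e1 e2 e3 <;>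
      first
        | (intro s; fin_cases s <;> assumption)
        | exact absurd e0 one_ne_zero
        | exact absurd e1 one_ne_zero
        | exact absurd e2 one_ne_zero
        | exact absurd e3 one_ne_zero
  · -- a=2 b=1
    have hz0 : v 0 = 0 := hsupp 0 (by decide) (by decide)
    have hz3 : v 3 = 0 := hsupp 3 (by decide) (by decide)
    have hz4 : v 4 = 0 := hsupp 4 (by decide) (by decide)
    have e0 := heq 0
    have e1 := heq 1
    have e2 := heq 2
    have e3 := heq 3
    simp only [Bsum, G, Fin.sum_univ_five, Matrix.cons_val', Matrix.cons_val_zero,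
      Matrix.cons_val_one, Matrix.head_cons, Matrix.head_fin_const, Matrix.cons_val_fin_one,
      Matrix.cons_val_two, Matrix.tail_cons, Matrix.cons_val_three, Matrix.cons_val_four,
      hz0, hz3, hz4, ff_zero_left, ff_zero_right, add_zero, zero_add] at e0 e1 e2 e3
    rcases gf4_cases (v 2) with h|h|h|h <;> rcases gf4_cases (v 1) with h'|h'|h'|h' <;>
      simp only [h, h'] at e0 e1 e2 e3 <;>
      simp only [ff11, ff1w, ff1w2, ffw1, ffww, ffww2, ff_zero_left, ff_zero_right,
        add_zero, zero_add, gf4_oneone] at e0 e1 e2 e3 <;>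
      first
        | (intro s; fin_cases s <;> assumption)
        | exact absurd e0 one_ne_zero
        | exact absurd e1 one_ne_zero
        | exact absurd e2 one_ne_zero
        | exact absurd e3 one_ne_zero
  · exact absurd rfl hab
  · -- a=2 b=3
    have hz0 : v 0 = 0 := hsupp 0 (by decide) (by decide)
    have hz1 : v 1 = 0 := hsupp 1 (by decide) (by decide)
    have hz4 : v 4 = 0 := hsupp 4 (by decide) (by decide)
    have e0 := heq 0
    have e1 := heq 1
    have e2 := heq 2
    have e3 := heq 3
    simp only [Bsum, G, Fin.sum_univ_five, Matrix.cons_val', Matrix.cons_val_zero,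
      Matrix.cons_val_one, Matrix.head_cons, Matrix.head_fin_const, Matrix.cons_val_fin_one,
      Matrix.cons_val_two, Matrix.tail_cons, Matrix.cons_val_three, Matrix.cons_val_four,
      hz0, hz1, hz4, ff_zero_left, ff_zero_right, add_zero, zero_add] at e0 e1 e2 e3
    rcases gf4_cases (v 2) with h|h|h|h <;> rcases gf4_cases (v 3) with h'|h'|h'|h' <;>
      simp only [h, h'] at e0 e1 e2 e3 <;>
      simp only [ff11, ff1w, ff1w2, ffw1, ffww, ffww2, ff_zero_left, ff_zero_right,
        add_zero, zero_add, gf4_oneone] at e0 e1 e2 e3 <;>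
      first
        | (intro s; fin_cases s <;> assumption)
        | exact absurd e0 one_ne_zero
        | exact absurd e1 one_ne_zero
        | exact absurd e2 one_ne_zero
        | exact absurd e3 one_ne_zero
  · -- a=2 b=4
    have hz0 : v 0 = 0 := hsupp 0 (by decide) (by decide)
    have hz1 : v 1 = 0 := hsupp 1 (by decide) (by decide)
    have hz3 : v 3 = 0 := hsupp 3 (by decide) (by decide)
    have e0 := heq 0
    have e1 := heq 1
    have e2 := heq 2
    have e3 := heq 3
    simp only [Bsum, G, Fin.sum_univ_five, Matrix.cons_val', Matrix.cons_val_zero,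
      Matrix.cons_val_one, Matrix.head_cons, Matrix.head_fin_const, Matrix.cons_val_fin_one,
      Matrix.cons_val_two, Matrix.tail_cons, Matrix.cons_val_three, Matrix.cons_val_four,
      hz0, hz1, hz3, ff_zero_left, ff_zero_right, add_zero, zero_add] at e0 e1 e2 e3
    rcases gf4_cases (v 2) with h|h|h|h <;> rcases gf4_cases (v 4) with h'|h'|h'|h' <;>
      simp only [h, h'] at e0 e1 e2 e3 <;>
      simp only [ff11, ff1w, ff1w2, ffw1, ffww, ffww2, ff_zero_left, ff_zero_right,
        add_zero, zero_add, gf4_oneone] at e0 e1 e2 e3 <;>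
      first
        | (intro s; fin_cases s <;> assumption)
        | exact absurd e0 one_ne_zero
        | exact absurd e1 one_ne_zero
        | exact absurd e2 one_ne_zero
        | exact absurd e3 one_ne_zero
  · -- a=3 b=0
    have hz1 : v 1 = 0 := hsupp 1 (by decide) (by decide)
    have hz2 : v 2 = 0 := hsupp 2 (by decide) (by decide)
    have hz4 : v 4 = 0 := hsupp 4 (by decide) (by decide)
    have e0 := heq 0
    have e1 := heq 1
    have e2 := heq 2
    have e3 := heq 3
    simp only [Bsum, G, Fin.sum_univ_five, Matrix.cons_val', Matrix.cons_val_zero,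
      Matrix.cons_val_one, Matrix.head_cons, Matrix.head_fin_const, Matrix.cons_val_fin_one,
      Matrix.cons_val_two, Matrix.tail_cons, Matrix.cons_val_three, Matrix.cons_val_four,
      hz1, hz2, hz4, ff_zero_left, ff_zero_right, add_zero, zero_add] at e0 e1 e2 e3
    rcases gf4_cases (v 3) with h|h|h|h <;> rcases gf4_cases (v 0) with h'|h'|h'|h' <;>
      simp only [h, h'] at e0 e1 e2 e3 <;>
      simp only [ff11, ff1w, ff1w2, ffw1, ffww, ffww2, ff_zero_left, ff_zero_right,
        add_zero, zero_add, gf4_oneone] at e0 e1 e2 e3 <;>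
      first
        | (intro s; fin_cases s <;> assumption)
        | exact absurd e0 one_ne_zero
        | exact absurd e1 one_ne_zero
        | exact absurd e2 one_ne_zero
        | exact absurd e3 one_ne_zero
  · -- a=3 b=1
    have hz0 : v 0 = 0 := hsupp 0 (by decide) (by decide)
    have hz2 : v 2 = 0 := hsupp 2 (by decide) (by decide)
    have hz4 : v 4 = 0 := hsupp 4 (by decide) (by decide)
    have e0 := heq 0
    have e1 := heq 1
    have e2 := heq 2
    have e3 := heq 3
    simp only [Bsum, G, Fin.sum_univ_five, Matrix.cons_val', Matrix.cons_val_zero,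
      Matrix.cons_val_one, Matrix.head_cons, Matrix.head_fin_const, Matrix.cons_val_fin_one,
      Matrix.cons_val_two, Matrix.tail_cons, Matrix.cons_val_three, Matrix.cons_val_four,
      hz0, hz2, hz4, ff_zero_left, ff_zero_right, add_zero, zero_add] at e0 e1 e2 e3
    rcases gf4_cases (v 3) with h|h|h|h <;> rcases gf4_cases (v 1) with h'|h'|h'|h' <;>
      simp only [h, h'] at e0 e1 e2 e3 <;>
      simp only [ff11, ff1w, ff1w2, ffw1, ffww, ffww2, ff_zero_left, ff_zero_right,
        add_zero, zero_add, gf4_oneone] at e0 e1 e2 e3 <;>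
      first
        | (intro s; fin_cases s <;> assumption)
        | exact absurd e0 one_ne_zero
        | exact absurd e1 one_ne_zero
        | exact absurd e2 one_ne_zero
        | exact absurd e3 one_ne_zero
  · -- a=3 b=2
    have hz0 : v 0 = 0 := hsupp 0 (by decide) (by decide)
    have hz1 : v 1 = 0 := hsupp 1 (by decide) (by decide)
    have hz4 : v 4 = 0 := hsupp 4 (by decide) (by decide)
    have e0 := heq 0
    have e1 := heq 1
    have e2 := heq 2
    have e3 := heq 3
    simp only [Bsum, G, Fin.sum_univ_five, Matrix.cons_val', Matrix.cons_val_zero,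
      Matrix.cons_val_one, Matrix.head_cons, Matrix.head_fin_const, Matrix.cons_val_fin_one,
      Matrix.cons_val_two, Matrix.tail_cons, Matrix.cons_val_three, Matrix.cons_val_four,
      hz0, hz1, hz4, ff_zero_left, ff_zero_right, add_zero, zero_add] at e0 e1 e2 e3
    rcases gf4_cases (v 3) with h|h|h|h <;> rcases gf4_cases (v 2) with h'|h'|h'|h' <;>
      simp only [h, h'] at e0 e1 e2 e3 <;>
      simp only [ff11, ff1w, ff1w2, ffw1, ffww, ffww2, ff_zero_left, ff_zero_right,
        add_zero, zero_add, gf4_oneone] at e0 e1 e2 e3 <;>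
      first
        | (intro s; fin_cases s <;> assumption)
        | exact absurd e0 one_ne_zero
        | exact absurd e1 one_ne_zero
        | exact absurd e2 one_ne_zero
        | exact absurd e3 one_ne_zero
  · exact absurd rfl hab
  · -- a=3 b=4
    have hz0 : v 0 = 0 := hsupp 0 (by decide) (by decide)
    have hz1 : v 1 = 0 := hsupp 1 (by decide) (by decide)
    have hz2 : v 2 = 0 := hsupp 2 (by decide) (by decide)
    have e0 := heq 0
    have e1 := heq 1
    have e2 := heq 2
    have e3 := heq 3
    simp only [Bsum, G, Fin.sum_univ_five, Matrix.cons_val', Matrix.cons_val_zero,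
      Matrix.cons_val_one, Matrix.head_cons, Matrix.head_fin_const, Matrix.cons_val_fin_one,
      Matrix.cons_val_two, Matrix.tail_cons, Matrix.cons_val_three, Matrix.cons_val_four,
      hz0, hz1, hz2, ff_zero_left, ff_zero_right, add_zero, zero_add] at e0 e1 e2 e3
    rcases gf4_cases (v 3) with h|h|h|h <;> rcases gf4_cases (v 4) with h'|h'|h'|h' <;>
      simp only [h, h'] at e0 e1 e2 e3 <;>
      simp only [ff11, ff1w, ff1w2, ffw1, ffww, ffww2, ff_zero_left, ff_zero_right,
        add_zero, zero_add, gf4_oneone] at e0 e1 e2 e3 <;>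
      first
        | (intro s; fin_cases s <;> assumption)
        | exact absurd e0 one_ne_zero
        | exact absurd e1 one_ne_zero
        | exact absurd e2 one_ne_zero
        | exact absurd e3 one_ne_zero
  · -- a=4 b=0
    have hz1 : v 1 = 0 := hsupp 1 (by decide) (by decide)
    have hz2 : v 2 = 0 := hsupp 2 (by decide) (by decide)
    have hz3 : v 3 = 0 := hsupp 3 (by decide) (by decide)
    have e0 := heq 0
    have e1 := heq 1
    have e2 := heq 2
    have e3 := heq 3
    simp only [Bsum, G, Fin.sum_univ_five, Matrix.cons_val', Matrix.cons_val_zero,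
      Matrix.cons_val_one, Matrix.head_cons, Matrix.head_fin_const, Matrix.cons_val_fin_one,
      Matrix.cons_val_two, Matrix.tail_cons, Matrix.cons_val_three, Matrix.cons_val_four,
      hz1, hz2, hz3, ff_zero_left, ff_zero_right, add_zero, zero_add] at e0 e1 e2 e3
    rcases gf4_cases (v 4) with h|h|h|h <;> rcases gf4_cases (v 0) with h'|h'|h'|h' <;>
      simp only [h, h'] at e0 e1 e2 e3 <;>
      simp only [ff11, ff1w, ff1w2, ffw1, ffww, ffww2, ff_zero_left, ff_zero_right,
        add_zero, zero_add, gf4_oneone] at e0 e1 e2 e3 <;>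
      first
        | (intro s; fin_cases s <;> assumption)
        | exact absurd e0 one_ne_zero
        | exact absurd e1 one_ne_zero
        | exact absurd e2 one_ne_zero
        | exact absurd e3 one_ne_zero
  · -- a=4 b=1
    have hz0 : v 0 = 0 := hsupp 0 (by decide) (by decide)
    have hz2 : v 2 = 0 := hsupp 2 (by decide) (by decide)
    have hz3 : v 3 = 0 := hsupp 3 (by decide) (by decide)
    have e0 := heq 0
    have e1 := heq 1
    have e2 := heq 2
    have e3 := heq 3
    simp only [Bsum, G, Fin.sum_univ_five, Matrix.cons_val', Matrix.cons_val_zero,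
      Matrix.cons_val_one, Matrix.head_cons, Matrix.head_fin_const, Matrix.cons_val_fin_one,
      Matrix.cons_val_two, Matrix.tail_cons, Matrix.cons_val_three, Matrix.cons_val_four,
      hz0, hz2, hz3, ff_zero_left, ff_zero_right, add_zero, zero_add] at e0 e1 e2 e3
    rcases gf4_cases (v 4) with h|h|h|h <;> rcases gf4_cases (v 1) with h'|h'|h'|h' <;>
      simp only [h, h'] at e0 e1 e2 e3 <;>
      simp only [ff11, ff1w, ff1w2, ffw1, ffww, ffww2, ff_zero_left, ff_zero_right,
        add_zero, zero_add, gf4_oneone] at e0 e1 e2 e3 <;>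
      first
        | (intro s; fin_cases s <;> assumption)
        | exact absurd e0 one_ne_zero
        | exact absurd e1 one_ne_zero
        | exact absurd e2 one_ne_zero
        | exact absurd e3 one_ne_zero
  · -- a=4 b=2
    have hz0 : v 0 = 0 := hsupp 0 (by decide) (by decide)
    have hz1 : v 1 = 0 := hsupp 1 (by decide) (by decide)
    have hz3 : v 3 = 0 := hsupp 3 (by decide) (by decide)
    have e0 := heq 0
    have e1 := heq 1
    have e2 := heq 2
    have e3 := heq 3
    simp only [Bsum, G, Fin.sum_univ_five, Matrix.cons_val', Matrix.cons_val_zero,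
      Matrix.cons_val_one, Matrix.head_cons, Matrix.head_fin_const, Matrix.cons_val_fin_one,
      Matrix.cons_val_two, Matrix.tail_cons, Matrix.cons_val_three, Matrix.cons_val_four,
      hz0, hz1, hz3, ff_zero_left, ff_zero_right, add_zero, zero_add] at e0 e1 e2 e3
    rcases gf4_cases (v 4) with h|h|h|h <;> rcases gf4_cases (v 2) with h'|h'|h'|h' <;>
      simp only [h, h'] at e0 e1 e2 e3 <;>
      simp only [ff11, ff1w, ff1w2, ffw1, ffww, ffww2, ff_zero_left, ff_zero_right,
        add_zero, zero_add, gf4_oneone] at e0 e1 e2 e3 <;>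
      first
        | (intro s; fin_cases s <;> assumption)
        | exact absurd e0 one_ne_zero
        | exact absurd e1 one_ne_zero
        | exact absurd e2 one_ne_zero
        | exact absurd e3 one_ne_zero
  · -- a=4 b=3
    have hz0 : v 0 = 0 := hsupp 0 (by decide) (by decide)
    have hz1 : v 1 = 0 := hsupp 1 (by decide) (by decide)
    have hz2 : v 2 = 0 := hsupp 2 (by decide) (by decide)
    have e0 := heq 0
    have e1 := heq 1
    have e2 := heq 2
    have e3 := heq 3
    simp only [Bsum, G, Fin.sum_univ_five, Matrix.cons_val', Matrix.cons_val_zero,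
      Matrix.cons_val_one, Matrix.head_cons, Matrix.head_fin_const, Matrix.cons_val_fin_one,
      Matrix.cons_val_two, Matrix.tail_cons, Matrix.cons_val_three, Matrix.cons_val_four,
      hz0, hz1, hz2, ff_zero_left, ff_zero_right, add_zero, zero_add] at e0 e1 e2 e3
    rcases gf4_cases (v 4) with h|h|h|h <;> rcases gf4_cases (v 3) with h'|h'|h'|h' <;>
      simp only [h, h'] at e0 e1 e2 e3 <;>
      simp only [ff11, ff1w, ff1w2, ffw1, ffww, ffww2, ff_zero_left, ff_zero_right,
        add_zero, zero_add, gf4_oneone] at e0 e1 e2 e3 <;>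
      first
        | (intro s; fin_cases s <;> assumption)
        | exact absurd e0 one_ne_zero
        | exact absurd e1 one_ne_zero
        | exact absurd e2 one_ne_zero
        | exact absurd e3 one_ne_zero
  · exact absurd rfl hab

lemma zmod2_cases : ∀ c : ZMod 2, c = 0 ∨ c = 1 := by decide

lemma Bsum_add (g u v : Fin 5 → GF4) : Bsum g (u + v) = Bsum g u + Bsum g v := by
  simp only [Bsum, Pi.add_apply, ff_add_right, Finset.sum_add_distrib]

lemma Bsum_zero (g : Fin 5 → GF4) : Bsum g 0 = 0 := by
  simp [Bsum, ff_zero_right]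

lemma Bsum_sq (g v : Fin 5 → GF4) : Bsum g v ^ 2 = Bsum g v := by
  simp only [Bsum]
  rw [sum_pow_char]
  exact Finset.sum_congr rfl fun s _ => ff_sq _ _

def iot (x : GF4) : ZMod 2 := if x = 0 then 0 else 1

lemma iot_zero : iot 0 = 0 := if_pos rfl

lemma iot_one : iot 1 = 1 := by simp [iot]

lemma iot_eq_zero (x : GF4) : iot x = 0 ↔ x = 0 := by
  by_cases h : x = 0 <;> simp [iot, h]

lemma iot_add (x y : GF4) (hx : x ^ 2 = x) (hy : y ^ 2 = y) :
    iot (x + y) = iot x + iot y := by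
  rcases gf4_sq_cases x hx with h | h <;> rcases gf4_sq_cases y hy with h' | h' <;>
    subst h <;> subst h' <;> simp [iot, gf4_oneone] <;> decide

def sigb : (Fin 5 → GF4) →ₗ[ZMod 2] (Fin 4 → ZMod 2) where
  toFun v := fun r => iot (Bsum (G r) v)
  map_add' u v := by
    funext r
    show iot (Bsum (G r) (u + v)) = iot (Bsum (G r) u) + iot (Bsum (G r) v)
    rw [Bsum_add, iot_add _ _ (Bsum_sq _ _) (Bsum_sq _ _)]
  map_smul' c v := by
    rcases zmod2_cases c with h | h <;> subst h
    · funext r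
      simp [Bsum_zero, iot_zero]
    · simp

def emb (b : Fin 18) (s : Fin 5) : Fin 90 :=
  ⟨5 * b.val + s.val, by have := b.isLt; have := s.isLt; omega⟩

def blk (i : Fin 90) : Fin 18 := ⟨i.val / 5, by have := i.isLt; omega⟩

def off (i : Fin 90) : Fin 5 := ⟨i.val % 5, by have := i.isLt; omega⟩

lemma blk_emb (b : Fin 18) (s : Fin 5) : blk (emb b s) = b := by
  apply Fin.ext
  have := s.isLt
  simp only [blk, emb]
  omega

lemma off_emb (b : Fin 18) (s : Fin 5) : off (emb b s) = s := by
  apply Fin.ext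
  have := s.isLt
  simp only [off, emb]
  omega

lemma emb_blk_off (i : Fin 90) : emb (blk i) (off i) = i := by
  apply Fin.ext
  simp only [emb, blk, off]
  omega

def embEquiv : (Fin 18 × Fin 5) ≃ Fin 90 where
  toFun p := emb p.1 p.2
  invFun i := (blk i, off i)
  left_inv p := by simp [blk_emb, off_emb]
  right_inv i := emb_blk_off i

def SIG : (Fin 90 → GF4) →ₗ[ZMod 2] (Fin 18 → Fin 4 → ZMod 2) where
  toFun v := fun b => sigb (fun s => v (emb b s))
  map_add' u v := by
    funext b
    show sigb (fun s => (u + v) (emb b s)) = _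
    have h : (fun s => (u + v) (emb b s)) =
        (fun s => u (emb b s)) + (fun s => v (emb b s)) := rfl
    rw [h, map_add]
    rfl
  map_smul' c v := by
    funext b
    show sigb (fun s => (c • v) (emb b s)) = _
    have h : (fun s => (c • v) (emb b s)) = c • (fun s => v (emb b s)) := rfl
    rw [h, map_smul]
    rfl

def D : Submodule (ZMod 2) (Fin 90 → GF4) := LinearMap.ker SIG

/-! ### surjectivity of the syndrome map -/

def Wv : Fin 4 → Fin 5 → GF4 :=
  ![![0, 1, 0, 0, 0], ![0, 0, 0, 0, omg], ![0, 0, omg, 0, 0], ![1, 0, 0, 0, 0]]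

lemma sigb_Wv (j r : Fin 4) : sigb (Wv j) r = if r = j then 1 else 0 := by
  fin_cases j <;> fin_cases r <;>
    simp [sigb, Bsum, G, Wv, Fin.sum_univ_five, ff_zero_left, ff_zero_right,
      ff11, ff1w, ffw1, ffww, iot_zero, iot_one, Matrix.vecHead, Matrix.vecTail]

def vbuild (y : Fin 18 → Fin 4 → ZMod 2) : Fin 90 → GF4 :=
  fun i => ∑ r : Fin 4, y (blk i) r • Wv r (off i)

lemma SIG_vbuild (y : Fin 18 → Fin 4 → ZMod 2) : SIG (vbuild y) = y := by
  funext b r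
  show sigb (fun s => vbuild y (emb b s)) r = y b r
  have h : (fun s => vbuild y (emb b s)) = ∑ r' : Fin 4, y b r' • Wv r' := by
    funext s
    simp [vbuild, blk_emb, off_emb, Finset.sum_apply]
  rw [h, map_sum]
  simp only [map_smul, Finset.sum_apply, Pi.smul_apply, sigb_Wv, smul_eq_mul,
    mul_ite, mul_one, mul_zero]
  simp

lemma SIG_surjective : Function.Surjective SIG := fun y => ⟨vbuild y, SIG_vbuild y⟩

lemma finrank_D : Module.finrank (ZMod 2) D = 108 := by
  have h1 := SIG.finrank_range_add_finrank_ker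
  rw [LinearMap.range_eq_top.mpr SIG_surjective, finrank_top] at h1
  have hdom : Module.finrank (ZMod 2) (Fin 90 → GF4) = 180 := by
    rw [Module.finrank_pi_fintype]
    have hgf : Module.finrank (ZMod 2) GF4 = 2 := GaloisField.finrank 2 (by norm_num)
    simp [hgf]
  have hcod : Module.finrank (ZMod 2) (Fin 18 → Fin 4 → ZMod 2) = 72 := by
    rw [Module.finrank_pi_fintype]
    simp [Module.finrank_pi]
  rw [hdom, hcod] at h1
  have : Module.finrank (ZMod 2) D = Module.finrank (ZMod 2) (LinearMap.ker SIG) := rfl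
  omega

lemma Gorth (r r' : Fin 4) : Bsum (G r) (G r') = 0 := by
  fin_cases r <;> fin_cases r' <;>
    simp [Bsum, G, Fin.sum_univ_five, ff_zero_left, ff_zero_right,
      ff11, ff1w, ffw1, ffww, gf4_oneone, Matrix.vecHead, Matrix.vecTail]

def ext5 (b : Fin 18) (g : Fin 5 → GF4) : Fin 90 → GF4 :=
  fun i => if blk i = b then g (off i) else 0

lemma ext5_emb_same (b : Fin 18) (g : Fin 5 → GF4) (s : Fin 5) :
    ext5 b g (emb b s) = g s := by simp [ext5, blk_emb, off_emb]

lemma ext5_emb_other {b b' : Fin 18} (hb : b' ≠ b) (g : Fin 5 → GF4) (s : Fin 5) :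
    ext5 b g (emb b' s) = 0 := by simp [ext5, blk_emb, hb]

lemma ext5_mem (b : Fin 18) (r : Fin 4) : ext5 b (G r) ∈ D := by
  rw [D, LinearMap.mem_ker]
  funext b' r'
  show iot (Bsum (G r') fun s => ext5 b (G r) (emb b' s)) = 0
  by_cases hb : b' = b
  · subst hb
    have h : (fun s => ext5 b' (G r) (emb b' s)) = G r := funext (ext5_emb_same b' (G r))
    rw [h, Gorth, iot_zero]
  · have h : (fun s => ext5 b (G r) (emb b' s)) = (0 : Fin 5 → GF4) :=
      funext (ext5_emb_other hb (G r))
    rw [h, Bsum_zero, iot_zero]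

lemma sum90 (h : Fin 90 → GF4) : ∑ i, h i = ∑ b : Fin 18, ∑ s : Fin 5, h (emb b s) := by
  have h1 : ∑ p : Fin 18 × Fin 5, h (emb p.1 p.2) = ∑ i, h i :=
    Fintype.sum_equiv embEquiv (fun p => h (emb p.1 p.2)) h fun p => rfl
  rw [← h1, Fintype.sum_prod_type]

lemma dual_sub (v : Fin 90 → GF4)
    (hv : ∀ u ∈ D, ∑ i, (u i * v i ^ 2 + u i ^ 2 * v i) = 0) : v ∈ D := by
  rw [D, LinearMap.mem_ker]
  funext b r
  show iot (Bsum (G r) fun s => v (emb b s)) = 0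
  have hu := hv (ext5 b (G r)) (ext5_mem b r)
  have hsum : ∑ i, (ext5 b (G r) i * v i ^ 2 + ext5 b (G r) i ^ 2 * v i)
      = Bsum (G r) (fun s => v (emb b s)) := by
    rw [sum90]
    rw [Finset.sum_eq_single b]
    · exact Finset.sum_congr rfl fun s _ => by rw [ext5_emb_same]; rfl
    · intro b' _ hb'
      apply Finset.sum_eq_zero
      intro s _
      rw [ext5_emb_other hb']
      ring
    · intro hb; exact absurd (Finset.mem_univ b) hb
  rw [hsum] at hu
  rw [hu, iot_zero]

lemma block3 (v : Fin 5 → GF4) (heq : ∀ r : Fin 4, Bsum (G r) v = 0) (hnz : v ≠ 0) :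
    ∃ s1 s2 s3 : Fin 5, s1 ≠ s2 ∧ s1 ≠ s3 ∧ s2 ≠ s3 ∧
      v s1 ≠ 0 ∧ v s2 ≠ 0 ∧ v s3 ≠ 0 := by
  classical
  set S : Finset (Fin 5) := Finset.univ.filter (fun s => v s ≠ 0) with hS
  by_cases h3 : 3 ≤ S.card
  · obtain ⟨t, hts, hcard⟩ := Finset.exists_subset_card_eq h3
    obtain ⟨a, b, c, hab, hac, hbc, ht⟩ := Finset.card_eq_three.mp hcard
    refine ⟨a, b, c, hab, hac, hbc, ?_, ?_, ?_⟩ <;>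
      [have := hts (ht ▸ (by simp : a ∈ ({a,b,c} : Finset (Fin 5))));
       have := hts (ht ▸ (by simp : b ∈ ({a,b,c} : Finset (Fin 5))));
       have := hts (ht ▸ (by simp : c ∈ ({a,b,c} : Finset (Fin 5))))] <;>
      · rw [hS, Finset.mem_filter] at this
        exact this.2
  · exfalso
    push_neg at h3
    have hS2 : S.card ≤ 2 := by omega
    obtain ⟨u, hSu, _, hu2⟩ := Finset.exists_subsuperset_card_eq (Finset.subset_univ S) hS2
      (by simp : 2 ≤ (Finset.univ : Finset (Fin 5)).card)
    obtain ⟨a, b, hab, hu⟩ := Finset.card_eq_two.mp hu2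
    have hsupp : ∀ s, s ≠ a → s ≠ b → v s = 0 := by
      intro s hsa hsb
      by_contra hvs
      have : s ∈ S := by rw [hS, Finset.mem_filter]; exact ⟨Finset.mem_univ s, hvs⟩
      have := hSu this
      rw [hu] at this
      simp at this
      tauto
    exact hnz (funext (pairZero v a b hab hsupp heq))

/-! ### the Hamming-type code over an alphabet of size 16 (syndromes), via GF(17) -/

instance : Fact (Nat.Prime 17) := ⟨by norm_num⟩

abbrev A16 := Fin 4 → ZMod 2

def psi (a : A16) : ZMod 17 :=
  ((a 0).val + 2 * (a 1).val + 4 * (a 2).val + 8 * (a 3).val : ℕ)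

lemma psi_inj : Function.Injective psi := by decide

def alp (b : Fin 18) : ZMod 17 := if b.val < 17 then 1 else 0

def bet (b : Fin 18) : ZMod 17 := if b.val < 17 then (b.val : ZMod 17) else 1

def eta (x : Fin 18 → A16) : ZMod 17 × ZMod 17 :=
  (∑ b, alp b * psi (x b), ∑ b, bet b * psi (x b))

lemma natCast_inj17 {m n : ℕ} (hm : m < 17) (hn : n < 17)
    (h : (m : ZMod 17) = n) : m = n := by
  have h1 := ZMod.val_cast_of_lt hm
  have h2 := ZMod.val_cast_of_lt hn
  have h3 := congrArg ZMod.val h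
  omega

lemma eta_dist (x x' : Fin 18 → A16) (hne : x ≠ x') (he : eta x = eta x') :
    ∃ b1 b2 b3 : Fin 18, b1 ≠ b2 ∧ b1 ≠ b3 ∧ b2 ≠ b3 ∧
      x b1 ≠ x' b1 ∧ x b2 ≠ x' b2 ∧ x b3 ≠ x' b3 := by
  classical
  set S : Finset (Fin 18) := Finset.univ.filter (fun b => x b ≠ x' b) with hS
  have hmem : ∀ b, b ∈ S ↔ x b ≠ x' b := by
    intro b; rw [hS, Finset.mem_filter]; simp
  by_cases h3 : 3 ≤ S.card
  · obtain ⟨t, hts, hcard⟩ := Finset.exists_subset_card_eq h3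
    obtain ⟨a, b, c, hab, hac, hbc, ht⟩ := Finset.card_eq_three.mp hcard
    refine ⟨a, b, c, hab, hac, hbc,
      (hmem a).mp (hts (ht ▸ (by simp))),
      (hmem b).mp (hts (ht ▸ (by simp))),
      (hmem c).mp (hts (ht ▸ (by simp)))⟩
  · exfalso
    push_neg at h3
    -- difference function
    set d : Fin 18 → ZMod 17 := fun b => psi (x b) - psi (x' b) with hd
    have hd0 : ∀ b, b ∉ S → d b = 0 := by
      intro b hb
      rw [hmem] at hb
      push_neg at hb
      simp [hd, hb]
    have hdne : ∀ b, b ∈ S → d b ≠ 0 := by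
      intro b hb
      rw [hmem] at hb
      simp only [hd, sub_ne_zero]
      exact fun h => hb (psi_inj h)
    have heq1 : ∑ b ∈ S, alp b * d b = 0 := by
      have h1 : ∑ b : Fin 18, alp b * d b = 0 := by
        have := congrArg Prod.fst he
        simp only [eta] at this
        simp only [hd, mul_sub, Finset.sum_sub_distrib, this, sub_self]
      rw [Finset.sum_subset (Finset.subset_univ S)
        (fun b _ hb => by rw [hd0 b hb, mul_zero])]
      exact h1
    have heq2 : ∑ b ∈ S, bet b * d b = 0 := by
      have h1 : ∑ b : Fin 18, bet b * d b = 0 := by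
        have := congrArg Prod.snd he
        simp only [eta] at this
        simp only [hd, mul_sub, Finset.sum_sub_distrib, this, sub_self]
      rw [Finset.sum_subset (Finset.subset_univ S)
        (fun b _ hb => by rw [hd0 b hb, mul_zero])]
      exact h1
    have hSne : S.Nonempty := by
      rcases Function.ne_iff.mp hne with ⟨b, hb⟩
      exact ⟨b, (hmem b).mpr hb⟩
    have hcases : S.card = 1 ∨ S.card = 2 := by
      have := Finset.Nonempty.card_pos hSne
      omega
    rcases hcases with hc | hc
    · obtain ⟨a, ha⟩ := Finset.card_eq_one.mp hc
      rw [ha, Finset.sum_singleton] at heq1 heq2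
      have hda := hdne a (ha ▸ Finset.mem_singleton_self a)
      rcases Nat.lt_or_ge a.val 17 with h17 | h17
      · rw [show alp a = 1 from if_pos h17, one_mul] at heq1
        exact hda heq1
      · rw [show bet a = 1 from if_neg (by omega), one_mul] at heq2
        exact hda heq2
    · obtain ⟨a, b, hab, hu⟩ := Finset.card_eq_two.mp hc
      rw [hu, Finset.sum_pair hab] at heq1 heq2
      have hda := hdne a (hu ▸ by simp)
      have hdb := hdne b (hu ▸ by simp)
      rcases Nat.lt_or_ge a.val 17 with ha17 | ha17 <;>
        rcases Nat.lt_or_ge b.val 17 with hb17 | hb17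
      · -- both < 17
        rw [show alp a = 1 from if_pos ha17, show alp b = 1 from if_pos hb17,
          one_mul, one_mul] at heq1
        rw [show bet a = ((a.val : ℕ) : ZMod 17) from if_pos ha17,
          show bet b = ((b.val : ℕ) : ZMod 17) from if_pos hb17] at heq2
        have hdbv : d b = - d a := by linear_combination heq1
        rw [hdbv] at heq2
        have : ((a.val : ℕ) : ZMod 17) = ((b.val : ℕ) : ZMod 17) := by
          have h17 : (((a.val : ℕ) : ZMod 17) - ((b.val : ℕ) : ZMod 17)) * d a = 0 := by
            linear_combination heq2
          rcases mul_eq_zero.mp h17 with h | h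
          · linear_combination h
          · exact absurd h hda
        exact hab (Fin.ext (natCast_inj17 ha17 hb17 this))
      · rw [show alp a = 1 from if_pos ha17, show alp b = 0 from if_neg (by omega),
          one_mul, zero_mul, add_zero] at heq1
        exact hda heq1
      · rw [show alp a = 0 from if_neg (by omega), show alp b = 1 from if_pos hb17,
          one_mul, zero_mul, zero_add] at heq1
        exact hdb heq1
      · exact hab (Fin.ext (by omega))

/-! ### assembling the code -/

lemma memD (u : Fin 90 → GF4) : u ∈ D ↔ SIG u = 0 := LinearMap.mem_ker

lemma vbuild_inj : Function.Injective vbuild := by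
  intro y y' h
  have := congrArg SIG h
  rwa [SIG_vbuild, SIG_vbuild] at this

lemma gf4_ne_iff (a b : GF4) : a ≠ b ↔ a + b ≠ 0 := by
  constructor
  · intro h hab
    exact h (by linear_combination hab - b * htwo)
  · intro h hab
    subst hab
    exact h (by linear_combination a * htwo)

lemma zmod2_add_ne (a b : ZMod 2) (h : a ≠ b) : a + b ≠ 0 := by revert a b h; decide

lemma card3 {S : Set (Fin 90)} (i1 i2 i3 : Fin 90) (h12 : i1 ≠ i2) (h13 : i1 ≠ i3)
    (h23 : i2 ≠ i3) (m1 : i1 ∈ S) (m2 : i2 ∈ S) (m3 : i3 ∈ S) : 3 ≤ Nat.card S := by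
  rw [Nat.card_coe_set_eq]
  have hsub : ({i1, i2, i3} : Set (Fin 90)) ⊆ S := by
    intro x hx
    rcases hx with h | h | h <;> subst h <;> assumption
  have h3 : ({i1, i2, i3} : Set (Fin 90)).ncard = 3 :=
    Set.ncard_eq_three.mpr ⟨i1, i2, i3, h12, h13, h23, rfl⟩
  calc (3 : ℕ) = ({i1, i2, i3} : Set (Fin 90)).ncard := h3.symm
    _ ≤ S.ncard := Set.ncard_le_ncard hsub (Set.toFinite S)

-- extract a nonzero coordinate in a block with nonzero syndrome
lemma block_nonzero (c : Fin 90 → GF4) (b : Fin 18) (hb : SIG c b ≠ 0) :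
    ∃ s : Fin 5, c (emb b s) ≠ 0 := by
  by_contra h
  push_neg at h
  apply hb
  have hz : (fun s => c (emb b s)) = (0 : Fin 5 → GF4) := funext h
  show sigb (fun s => c (emb b s)) = 0
  rw [hz, map_zero]

lemma pigeon : ∃ y0 : ZMod 17 × ZMod 17,
    16 ^ 18 / 289 < ((Finset.univ : Finset (Fin 18 → A16)).filter
      (fun x => eta x = y0)).card := by
  have hlt : (Finset.univ : Finset (ZMod 17 × ZMod 17)).card * (16 ^ 18 / 289)
      < (Finset.univ : Finset (Fin 18 → A16)).card := by
    have ht : (Finset.univ : Finset (ZMod 17 × ZMod 17)).card = 289 := by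
      simp [Finset.card_univ]
    have hs : (Finset.univ : Finset (Fin 18 → A16)).card = 16 ^ 18 := by
      rw [Finset.card_univ, Fintype.card_fun, Fintype.card_fun, ZMod.card, Fintype.card_fin,
        Fintype.card_fin]
      norm_num
    rw [ht, hs]
    norm_num
  obtain ⟨y0, _, h⟩ := Finset.exists_lt_card_fiber_of_mul_lt_card_of_maps_to
    (f := eta) (fun a _ => Finset.mem_univ _) hlt
  exact ⟨y0, h⟩

lemma zmod2_self : ∀ a : ZMod 2, a + a = 0 := by decide

/-- **The union normalizer code of the nonadditive quantum code `((90, 2^81.825, 3))₂`.**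
There are an `𝔽₂`-linear subspace `D ⊆ GF(4)^90` of `𝔽₂`-dimension `108` containing its
trace-Hermitian dual, and a finite set `T` of coset representatives with `|T| · 17² ≥ 16^18`,
such that the cosets `t + D`, `t ∈ T`, are pairwise disjoint and any two distinct vectors in
their union are at Hamming distance at least `3`. -/
theorem exists_union_normalizer_code_90 :
    ∃ (D : Submodule (ZMod 2) (Fin 90 → GaloisField 2 2))
      (T : Finset (Fin 90 → GaloisField 2 2)),
      Module.finrank (ZMod 2) D = 108 ∧
      (∀ v : Fin 90 → GaloisField 2 2,
        (∀ u ∈ D, ∑ i, (u i * v i ^ 2 + u i ^ 2 * v i) = 0) → v ∈ D) ∧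
      16 ^ 18 ≤ T.card * 17 ^ 2 ∧
      (∀ t ∈ T, ∀ t' ∈ T, t ≠ t' →
        ∀ u ∈ D, ∀ u' ∈ D, t + u ≠ t' + u') ∧
      (∀ t ∈ T, ∀ t' ∈ T, ∀ u ∈ D, ∀ u' ∈ D, t + u ≠ t' + u' →
        3 ≤ Nat.card {i : Fin 90 | (t + u) i ≠ (t' + u') i}) := by
  obtain ⟨y0, hy0⟩ := pigeon
  set Tbar := (Finset.univ : Finset (Fin 18 → A16)).filter (fun x => eta x = y0) with hTbar
  have hTmem : ∀ x ∈ Tbar, eta x = y0 := fun x hx => (Finset.mem_filter.mp hx).2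
  refine ⟨D, Tbar.image vbuild, finrank_D, dual_sub, ?_, ?_, ?_⟩
  · -- cardinality
    rw [Finset.card_image_of_injective _ vbuild_inj]
    have h1 : 16 ^ 18 / 289 + 1 ≤ Tbar.card := hy0
    calc (16:ℕ) ^ 18 ≤ (16 ^ 18 / 289 + 1) * 17 ^ 2 := by norm_num
      _ ≤ Tbar.card * 17 ^ 2 := Nat.mul_le_mul_right _ h1
  · -- disjointness
    intro t ht t' ht' hne u hu u' hu' heq
    obtain ⟨xx, hxT, rfl⟩ := Finset.mem_image.mp ht
    obtain ⟨xx', hxT', rfl⟩ := Finset.mem_image.mp ht'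
    apply hne
    have h := congrArg SIG heq
    rw [map_add, map_add, (memD u).mp hu, (memD u').mp hu', add_zero, add_zero,
      SIG_vbuild, SIG_vbuild] at h
    rw [h]
  · -- distance
    intro t ht t' ht' u hu u' hu' hne
    obtain ⟨xx, hxT, rfl⟩ := Finset.mem_image.mp ht
    obtain ⟨xx', hxT', rfl⟩ := Finset.mem_image.mp ht'
    set c : Fin 90 → GF4 := (vbuild xx + u) + (vbuild xx' + u') with hc
    have hmemiff : ∀ i, (vbuild xx + u) i ≠ (vbuild xx' + u') i ↔ c i ≠ 0 := by
      intro i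
      rw [gf4_ne_iff]
      exact Iff.rfl
    have hSIGc : SIG c = xx + xx' := by
      rw [hc, map_add, map_add, map_add, (memD u).mp hu, (memD u').mp hu',
        add_zero, add_zero, SIG_vbuild, SIG_vbuild]
    by_cases hxx : xx = xx'
    · -- same coset: difference lies in D
      have hc0 : SIG c = 0 := by
        rw [hSIGc, hxx]
        funext b r
        exact zmod2_self _
      have hcne : c ≠ 0 := by
        intro h
        apply hne
        funext i
        by_contra hq
        exact (hmemiff i).mp hq (congrFun h i)
      obtain ⟨i0, hi0⟩ := Function.ne_iff.mp hcne
      have hvb : (fun s => c (emb (blk i0) s)) ≠ 0 := by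
        intro h
        apply hi0
        have := congrFun h (off i0)
        rwa [emb_blk_off] at this
      have hBs : ∀ r : Fin 4, Bsum (G r) (fun s => c (emb (blk i0) s)) = 0 := by
        intro r
        have h0 : SIG c (blk i0) r = 0 := by rw [hc0]; rfl
        exact (iot_eq_zero _).mp h0
      obtain ⟨s1, s2, s3, h12, h13, h23, hv1, hv2, hv3⟩ := block3 _ hBs hvb
      refine card3 (emb (blk i0) s1) (emb (blk i0) s2) (emb (blk i0) s3) ?_ ?_ ?_
        ((hmemiff _).mpr hv1) ((hmemiff _).mpr hv2) ((hmemiff _).mpr hv3)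
      · intro h; exact h12 (by rw [← off_emb (blk i0) s1, ← off_emb (blk i0) s2, h])
      · intro h; exact h13 (by rw [← off_emb (blk i0) s1, ← off_emb (blk i0) s3, h])
      · intro h; exact h23 (by rw [← off_emb (blk i0) s2, ← off_emb (blk i0) s3, h])
    · -- different cosets: syndromes differ in at least three blocks
      have hee : eta xx = eta xx' := by rw [hTmem xx hxT, hTmem xx' hxT']
      obtain ⟨b1, b2, b3, hb12, hb13, hb23, hx1, hx2, hx3⟩ := eta_dist xx xx' hxx hee
      have hblock : ∀ b : Fin 18, xx b ≠ xx' b → ∃ s, c (emb b s) ≠ 0 := by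
        intro b hb
        apply block_nonzero c b
        obtain ⟨r, hr⟩ := Function.ne_iff.mp hb
        intro h0
        have h1 : SIG c b r = 0 := congrFun h0 r
        rw [hSIGc] at h1
        exact zmod2_add_ne _ _ hr h1
      obtain ⟨s1, hs1⟩ := hblock b1 hx1
      obtain ⟨s2, hs2⟩ := hblock b2 hx2
      obtain ⟨s3, hs3⟩ := hblock b3 hx3
      refine card3 (emb b1 s1) (emb b2 s2) (emb b3 s3) ?_ ?_ ?_
        ((hmemiff _).mpr hs1) ((hmemiff _).mpr hs2) ((hmemiff _).mpr hs3)
      · intro h; exact hb12 (by rw [← blk_emb b1 s1, ← blk_emb b2 s2, h])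
      · intro h; exact hb13 (by rw [← blk_emb b1 s1, ← blk_emb b3 s3, h])
      · intro h; exact hb23 (by rw [← blk_emb b2 s2, ← blk_emb b3 s3, h])
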